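/- Let $X$ be a random variable on a finite set $\mathcal{X}$ with pmf $P_X$, let $k \ge 2$ and $1\le l\le k$, and let $\mathcal{P} = \{\mathcal{P}_1,\dots,\mathcal{P}_l\}$ be a partition of $\{1,\dots,k\}$ into $l$ nonempty blocks. Let $T_\mathcal{P} \subseteq \mathcal{X}^k$ be the set of tuples $x^k$ such that $x_i = x_j$ iff $i,j$ belong to the same block of $\mathcal{P}$. Then $\sum_{x^k \in T_\mathcal{P}} \prod_{i=1}^k P_X(x_i) \le \big(\sum_{x\in\mathcal X} P_X(x)^{k-l+1}\big)$ with the convention that the right-hand side equals $1$ when $l = k$. -/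

import Mathlib

lemma chebS {X : Type*} [Fintype X] (P : X → ℝ) (hP0 : ∀ x, 0 ≤ P x)
    (hP1 : ∑ x, P x = 1) (a b : ℕ) :
    (∑ x, P x ^ (a + 1)) * (∑ x, P x ^ (b + 1)) ≤ ∑ x, P x ^ (a + b + 1) := by
  have key : 0 ≤ ∑ x : X, ∑ y : X,
      (P x * P y) * ((P x ^ a - P y ^ a) * (P x ^ b - P y ^ b)) := by
    refine Finset.sum_nonneg fun x _ => Finset.sum_nonneg fun y _ => ?_
    refine mul_nonneg (mul_nonneg (hP0 x) (hP0 y)) ?_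
    rcases le_total (P x) (P y) with h | h
    · have h1 := pow_le_pow_left₀ (hP0 x) h a
      have h2 := pow_le_pow_left₀ (hP0 x) h b
      nlinarith
    · have h1 := pow_le_pow_left₀ (hP0 y) h a
      have h2 := pow_le_pow_left₀ (hP0 y) h b
      nlinarith
  have expand : ∑ x : X, ∑ y : X,
      (P x * P y) * ((P x ^ a - P y ^ a) * (P x ^ b - P y ^ b)) =
      2 * (∑ x, P x ^ (a + b + 1)) * (∑ x, P x)
        - 2 * ((∑ x, P x ^ (a + 1)) * (∑ x, P x ^ (b + 1))) := by
    have h1 : ∀ x y : X, (P x * P y) * ((P x ^ a - P y ^ a) * (P x ^ b - P y ^ b)) =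
        (P x ^ (a + b + 1) * P y + P y ^ (a + b + 1) * P x)
          - (P x ^ (a + 1) * P y ^ (b + 1) + P y ^ (a + 1) * P x ^ (b + 1)) := by
      intro x y; ring
    simp only [h1, Finset.sum_sub_distrib, Finset.sum_add_distrib,
      ← Finset.mul_sum, ← Finset.sum_mul]
    ring
  rw [hP1, mul_one] at expand
  linarith

lemma Snonneg {X : Type*} [Fintype X] (P : X → ℝ) (hP0 : ∀ x, 0 ≤ P x) (n : ℕ) :
    0 ≤ ∑ x, P x ^ n :=
  Finset.sum_nonneg fun x _ => pow_nonneg (hP0 x) n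

lemma prodS {X : Type*} [Fintype X] (P : X → ℝ) (hP0 : ∀ x, 0 ≤ P x)
    (hP1 : ∑ x, P x = 1) {ι : Type*} [DecidableEq ι] (s : Finset ι) (hs : s.Nonempty)
    (m : ι → ℕ) (hm : ∀ b ∈ s, 1 ≤ m b) :
    ∏ b ∈ s, (∑ x, P x ^ m b) ≤ ∑ x, P x ^ ((∑ b ∈ s, (m b - 1)) + 1) := by
  induction hs using Finset.Nonempty.cons_induction with
  | singleton a =>
      simp only [Finset.prod_singleton, Finset.sum_singleton]
      rw [Nat.sub_add_cancel (hm a (Finset.mem_singleton_self a))]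
  | cons a s ha hs ih =>
      rw [Finset.prod_cons, Finset.sum_cons]
      have ih' := ih (fun b hb => hm b (Finset.mem_cons_of_mem hb))
      have h1 : (∑ x, P x ^ m a) * ∏ b ∈ s, (∑ x, P x ^ m b)
          ≤ (∑ x, P x ^ m a) * ∑ x, P x ^ ((∑ b ∈ s, (m b - 1)) + 1) :=
        mul_le_mul_of_nonneg_left ih' (Snonneg P hP0 _)
      refine h1.trans ?_
      obtain ⟨a', ha'⟩ : ∃ a', m a = a' + 1 :=
        ⟨m a - 1, (Nat.succ_pred_eq_of_pos (hm a (Finset.mem_cons_self a s))).symm⟩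
      rw [ha']
      simp only [Nat.add_sub_cancel]
      exact chebS P hP0 hP1 a' (∑ b ∈ s, (m b - 1))

/-- Partition-pattern probability bound: for a pmf `P_X` on a finite set, a surjection
`B : Fin k → Fin l` encoding a partition of `{1,…,k}` into `l` nonempty blocks, and
`T_B` the set of `k`-tuples whose coincidence pattern matches `B`, one has
`∑_{x ∈ T_B} ∏ᵢ P_X(xᵢ) ≤ ∑_x P_X(x)^{k-l+1}` (the right side equals `1` when `l = k`). -/
theorem partition_pattern_prob_bound {X : Type*} [Fintype X] [DecidableEq X]
    (P : X → ℝ) (hP0 : ∀ x, 0 ≤ P x) (hP1 : ∑ x, P x = 1)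
    (k l : ℕ) (hk : 2 ≤ k) (hl1 : 1 ≤ l) (hlk : l ≤ k)
    (B : Fin k → Fin l) (hB : Function.Surjective B) :
    ∑ x ∈ Finset.univ.filter (fun x : Fin k → X => ∀ i j, x i = x j ↔ B i = B j),
        ∏ i, P (x i)
      ≤ ∑ x : X, P x ^ (k - l + 1) := by
  classical
  set m : Fin l → ℕ := fun b => (Finset.univ.filter (fun i => B i = b)).card with hm
  -- Step 1: relax the pattern condition
  have step1 : ∑ x ∈ Finset.univ.filter (fun x : Fin k → X => ∀ i j, x i = x j ↔ B i = B j),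
        ∏ i, P (x i)
      ≤ ∑ x ∈ Finset.univ.filter (fun x : Fin k → X => ∀ i j, B i = B j → x i = x j),
        ∏ i, P (x i) := by
    apply Finset.sum_le_sum_of_subset_of_nonneg
    · exact Finset.monotone_filter_right _ (fun x _ hx i j hij => (hx i j).2 hij)
    · intro x _ _
      exact Finset.prod_nonneg fun i _ => hP0 _
  -- Step 2: reparametrize by functions on blocks
  have step2 : ∑ x ∈ Finset.univ.filter (fun x : Fin k → X => ∀ i j, B i = B j → x i = x j),
        ∏ i, P (x i)
      = ∑ y : Fin l → X, ∏ i, P (y (B i)) := by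
    refine (Finset.sum_nbij' (fun x : Fin k → X => x ∘ Function.surjInv hB)
      (fun y : Fin l → X => y ∘ B) ?_ ?_ ?_ ?_ ?_).symm.symm
    · intro x _; exact Finset.mem_univ _
    · intro y _
      simp only [Finset.mem_filter, Finset.mem_univ, true_and]
      intro i j hij
      simp [Function.comp, hij]
    · intro x hx
      simp only [Finset.mem_filter, Finset.mem_univ, true_and] at hx
      funext i
      exact hx _ i (Function.surjInv_eq hB (B i))
    · intro y _
      funext b
      simp [Function.comp, Function.surjInv_eq hB b]
    · intro x hx
      simp only [Finset.mem_filter, Finset.mem_univ, true_and] at hx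
      refine Finset.prod_congr rfl fun i _ => ?_
      have := hx (Function.surjInv hB (B i)) i (Function.surjInv_eq hB (B i))
      simp [Function.comp, this]
  -- Step 3+4: factor over blocks
  have step3 : ∀ y : Fin l → X, ∏ i, P (y (B i)) = ∏ b, P (y b) ^ m b := by
    intro y
    rw [← Finset.prod_fiberwise_of_maps_to (fun i _ => Finset.mem_univ (B i))
      (fun i => P (y (B i)))]
    refine Finset.prod_congr rfl fun b _ => ?_
    have hcong : ∀ i ∈ Finset.univ.filter (fun i => B i = b), P (y (B i)) = P (y b) := by
      intro i hi
      simp only [Finset.mem_filter] at hi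
      rw [hi.2]
    rw [Finset.prod_congr rfl hcong, Finset.prod_const]
  have step4 : ∑ y : Fin l → X, ∏ b, P (y b) ^ m b = ∏ b, ∑ x, P x ^ m b := by
    rw [Finset.prod_univ_sum, ← Fintype.piFinset_univ]
  -- Step 5: each block has size ≥ 1, sizes sum to k
  have hm1 : ∀ b ∈ (Finset.univ : Finset (Fin l)), 1 ≤ m b := by
    intro b _
    obtain ⟨i, hi⟩ := hB b
    exact Finset.card_pos.2 ⟨i, by simp [hi]⟩
  have hsum : ∑ b, m b = k := by
    rw [hm, ← Finset.card_eq_sum_card_fiberwise (fun i _ => Finset.mem_univ (B i))]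
    simp
  have hsum' : (∑ b, (m b - 1)) + 1 = k - l + 1 := by
    have : ∑ b : Fin l, (m b - 1 + 1) = ∑ b, m b :=
      Finset.sum_congr rfl fun b hb => Nat.sub_add_cancel (hm1 b hb)
    rw [Finset.sum_add_distrib] at this
    simp only [Finset.sum_const, Finset.card_univ, Fintype.card_fin, smul_eq_mul,
      mul_one] at this
    omega
  have hne : (Finset.univ : Finset (Fin l)).Nonempty := ⟨⟨0, hl1⟩, Finset.mem_univ _⟩
  calc ∑ x ∈ Finset.univ.filter (fun x : Fin k → X => ∀ i j, x i = x j ↔ B i = B j),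
        ∏ i, P (x i)
      ≤ ∑ y : Fin l → X, ∏ i, P (y (B i)) := step1.trans_eq step2
    _ = ∏ b, ∑ x, P x ^ m b := by rw [Finset.sum_congr rfl fun y _ => step3 y, step4]
    _ ≤ ∑ x, P x ^ ((∑ b, (m b - 1)) + 1) := prodS P hP0 hP1 Finset.univ hne m hm1
    _ = ∑ x : X, P x ^ (k - l + 1) := by rw [hsum']
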